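/- arXiv:2602.07999 — 8 statements merged into one kernel-verified Lean document; each statement's English description precedes it below -/
import Mathlib

section
/- For probability measures P ≪ Q on a measurable space and any measurable set E, P(E) ≤ Q(E) + sqrt(Q(E)·(1 − Q(E))·χ²(P‖Q)), where χ²(P‖Q) = ∫ ((dP/dQ)² − 1) dQ. -/
open MeasureTheory

/-- Chi-squared change of measure:
`P(E) ≤ Q(E) + sqrt(Q(E)(1 − Q(E)) χ²(P‖Q))` where `χ²(P‖Q) = ∫ (dP/dQ)² dQ − 1`. -/
theorem chisq_change_of_measure {X : Type*} [MeasurableSpace X]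
    (P Q : Measure X) [IsProbabilityMeasure P] [IsProbabilityMeasure Q]
    (hPQ : P ≪ Q)
    (hint : Integrable (fun x => ((P.rnDeriv Q x).toReal) ^ 2) Q)
    (E : Set X) (hE : MeasurableSet E) :
    (P E).toReal ≤ (Q E).toReal +
      Real.sqrt ((Q E).toReal * (1 - (Q E).toReal) *
        ((∫ x, ((P.rnDeriv Q x).toReal) ^ 2 ∂Q) - 1)) := by
  set f : X → ℝ := fun x => (P.rnDeriv Q x).toReal with hf_def
  set q : ℝ := (Q E).toReal with hq_def
  have hf_meas : AEStronglyMeasurable f Q :=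
    (Measure.measurable_rnDeriv P Q).ennreal_toReal.aestronglyMeasurable
  have hf_int : Integrable f Q := Measure.integrable_toReal_rnDeriv
  have hf_total : ∫ x, f x ∂Q = 1 := by
    rw [Measure.integral_toReal_rnDeriv hPQ]
    simp
  have hfE : ∫ x in E, f x ∂Q = (P E).toReal :=
    Measure.setIntegral_toReal_rnDeriv hPQ E
  -- the two L² functions
  set g : X → ℝ := fun x => f x - 1 with hg_def
  set h : X → ℝ := fun x => E.indicator (fun _ => (1 : ℝ)) x - q with hh_def
  have hg_mem : MemLp g 2 Q := by
    have : MemLp f 2 Q := (memLp_two_iff_integrable_sq hf_meas).2 hint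
    exact this.sub (memLp_const 1)
  have hind_mem : MemLp (E.indicator (fun _ => (1 : ℝ))) 2 Q :=
    (memLp_const (1 : ℝ)).indicator hE
  have hh_mem : MemLp h 2 Q := hind_mem.sub (memLp_const q)
  have hg_int : Integrable g Q := hf_int.sub (integrable_const 1)
  have hind_int : Integrable (E.indicator (fun _ => (1 : ℝ))) Q :=
    (integrable_const (1 : ℝ)).indicator hE
  have hind_integral : ∫ x, E.indicator (fun _ => (1 : ℝ)) x ∂Q = q := by
    rw [integral_indicator hE, setIntegral_const, smul_eq_mul, mul_one]
    rfl
  -- value of the cross integral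
  have hg_integral : ∫ x, g x ∂Q = 0 := by
    rw [hg_def]
    rw [integral_sub hf_int (integrable_const 1), hf_total, integral_const]
    simp
  have hgh_eq : (fun x => g x * h x) = fun x => E.indicator g x - q * g x := by
    funext x
    by_cases hx : x ∈ E <;>
      simp [hh_def, Set.indicator_of_mem, Set.indicator_of_notMem, hx] <;> ring
  have hgE_int : Integrable (E.indicator g) Q := hg_int.indicator hE
  have hgh_int : Integrable (fun x => g x * h x) Q := by
    rw [hgh_eq]; exact hgE_int.sub (hg_int.const_mul q)
  have hcross : ∫ x, g x * h x ∂Q = (P E).toReal - q := by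
    rw [hgh_eq, integral_sub hgE_int (hg_int.const_mul q), integral_indicator hE,
      integral_const_mul, hg_integral, mul_zero, sub_zero]
    simp only [hg_def]
    rw [integral_sub hf_int.restrict (integrable_const 1), hfE, integral_const]
    simp [hq_def]
    rfl
  -- Cauchy-Schwarz
  have hpq : (2 : ℝ).HolderConjugate 2 := .two_two
  have h2 : ENNReal.ofReal (2 : ℝ) = 2 := by simp [ENNReal.ofReal_ofNat]
  have hCS := integral_mul_norm_le_Lp_mul_Lq (μ := Q) hpq
    (h2 ▸ hg_mem) (h2 ▸ hh_mem)
  have hnorm_int : Integrable (fun x => ‖g x‖ * ‖h x‖) Q := by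
    simpa [norm_mul] using hgh_int.norm
  have habs : ∫ x, g x * h x ∂Q ≤ ∫ x, ‖g x‖ * ‖h x‖ ∂Q := by
    refine integral_mono hgh_int hnorm_int fun x => ?_
    calc g x * h x ≤ |g x * h x| := le_abs_self _
      _ = ‖g x‖ * ‖h x‖ := by rw [abs_mul]; rfl
  -- compute the two squared norms
  have hgsq : (fun a => ‖g a‖ ^ (2 : ℝ)) = fun a => g a ^ 2 := by
    funext a
    rw [show ((2 : ℝ) = ((2 : ℕ) : ℝ)) by norm_num, Real.rpow_natCast]
    simp [sq_abs]
  have hhsq : (fun a => ‖h a‖ ^ (2 : ℝ)) = fun a => h a ^ 2 := by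
    funext a
    rw [show ((2 : ℝ) = ((2 : ℕ) : ℝ)) by norm_num, Real.rpow_natCast]
    simp [sq_abs]
  have hgsq_int : Integrable (fun x => g x ^ 2) Q := hg_mem.integrable_sq
  have hhsq_int : Integrable (fun x => h x ^ 2) Q := hh_mem.integrable_sq
  have hg2 : ∫ a, g a ^ 2 ∂Q = (∫ x, f x ^ 2 ∂Q) - 1 := by
    have heq : (fun a => g a ^ 2) = fun a => f a ^ 2 - (2 * f a - 1) := by
      funext a; simp only [hg_def]; ring
    have hsub1 : Integrable (fun a => 2 * f a - 1) Q :=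
      (hf_int.const_mul 2).sub (integrable_const 1)
    rw [heq, integral_sub hint hsub1,
      integral_sub (hf_int.const_mul 2) (integrable_const 1), integral_const_mul, hf_total,
      integral_const]
    simp
    norm_num
    rfl
  have hh2 : ∫ a, h a ^ 2 ∂Q = q * (1 - q) := by
    have heq : (fun a => h a ^ 2) =
        fun a => (1 - 2 * q) * E.indicator (fun _ => (1 : ℝ)) a + q ^ 2 := by
      funext a
      by_cases hx : a ∈ E <;>
        simp [hh_def, Set.indicator_of_mem, Set.indicator_of_notMem, hx] <;> ring
    rw [heq, integral_add (hind_int.const_mul _) (integrable_const _), integral_const_mul,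
      hind_integral, integral_const]
    have hq1 : q ≤ 1 := by
      rw [hq_def]
      exact ENNReal.toReal_le_of_le_ofReal zero_le_one (by simpa using prob_le_one)
    simp only [measure_univ, probReal_univ, ENNReal.toReal_one, smul_eq_mul, one_mul]
    ring
  have hg2_nonneg : 0 ≤ (∫ x, f x ^ 2 ∂Q) - 1 := by
    rw [← hg2]
    exact integral_nonneg fun a => sq_nonneg _
  have hkey : (P E).toReal - q ≤
      Real.sqrt (q * (1 - q) * ((∫ x, f x ^ 2 ∂Q) - 1)) := by
    rw [← hcross]
    refine habs.trans (hCS.trans_eq ?_)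
    rw [hgsq, hhsq, hg2, hh2, ← Real.sqrt_eq_rpow, ← Real.sqrt_eq_rpow,
      ← Real.sqrt_mul hg2_nonneg, mul_comm]
  linarith
end

section
/- For probability measures P ≪ Q, any measurable set E, and any c > 0, P(E) ≤ (KL(P‖Q) + log(1 + Q(E)(e^c − 1))) / c, where KL denotes the Kullback–Leibler divergence. -/
open MeasureTheory

/-- KL change of measure: for every `c > 0`,
`P(E) ≤ (KL(P‖Q) + log(1 + Q(E)(e^c − 1)))/c` where `KL(P‖Q) = ∫ log(dP/dQ) dP`. -/
theorem kl_change_of_measure {X : Type*} [MeasurableSpace X]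
    (P Q : Measure X) [IsProbabilityMeasure P] [IsProbabilityMeasure Q]
    (hPQ : P ≪ Q)
    (hint : Integrable (fun x => Real.log ((P.rnDeriv Q x).toReal)) P)
    (E : Set X) (hE : MeasurableSet E) (c : ℝ) (hc : 0 < c) :
    (P E).toReal ≤
      ((∫ x, Real.log ((P.rnDeriv Q x).toReal) ∂P) +
        Real.log (1 + (Q E).toReal * (Real.exp c - 1))) / c := by
  set Z : ℝ := 1 + (Q E).toReal * (Real.exp c - 1) with hZdef
  have hec : (1 : ℝ) < Real.exp c := by
    simpa using Real.exp_lt_exp.mpr hc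
  have hQE0 : (0 : ℝ) ≤ (Q E).toReal := ENNReal.toReal_nonneg
  have hZpos : 0 < Z := by
    have : 0 ≤ (Q E).toReal * (Real.exp c - 1) := mul_nonneg hQE0 (by linarith)
    simp only [hZdef]; linarith
  -- the tilted density
  set g : X → ℝ := fun x => (E.indicator (fun _ => Real.exp c - 1) x + 1) / Z with hgdef
  have hgpos : ∀ x, 0 < g x := by
    intro x
    apply div_pos _ hZpos
    by_cases hx : x ∈ E
    · simp [hx]; linarith
    · simp [hx]
  have hgmeas : Measurable g :=
    ((measurable_const.indicator hE).add measurable_const).div measurable_const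
  have hgbound : ∀ x, ‖g x‖ ≤ Real.exp c / Z := by
    intro x
    rw [Real.norm_eq_abs, abs_of_pos (hgpos x)]
    simp only [hgdef]
    gcongr
    by_cases hx : x ∈ E
    · simp [hx]
    · simp [hx]; linarith
  have hgintQ : Integrable g Q :=
    Integrable.mono' (integrable_const (Real.exp c / Z))
      hgmeas.aestronglyMeasurable (Filter.Eventually.of_forall hgbound)
  have hgintP : Integrable g P :=
    Integrable.mono' (integrable_const (Real.exp c / Z))
      hgmeas.aestronglyMeasurable (Filter.Eventually.of_forall hgbound)
  -- ∫ g dQ = 1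
  have hgint_one : ∫ x, g x ∂Q = 1 := by
    simp only [hgdef, div_eq_mul_inv]
    rw [integral_mul_const, integral_add (Integrable.indicator (integrable_const _) hE)
      (integrable_const 1)]
    rw [integral_indicator_const _ hE]
    simp only [smul_eq_mul, integral_const, measure_univ, measureReal_def, ENNReal.toReal_one, one_smul]
    rw [hZdef] at hZpos ⊢
    field_simp
    ring
  -- the function h = g / (dP/dQ)
  set D : X → ENNReal := P.rnDeriv Q with hDdef
  set H : X → ENNReal := fun x => ENNReal.ofReal (g x) / D x with hHdef
  have hDmeas : Measurable D := Measure.measurable_rnDeriv P Q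
  have hHmeas : Measurable H := (ENNReal.measurable_ofReal.comp hgmeas).div hDmeas
  -- ∫⁻ H dP ≤ 1
  have hH_le_one : ∫⁻ x, H x ∂P ≤ 1 := by
    rw [← MeasureTheory.lintegral_rnDeriv_mul hPQ hHmeas.aemeasurable]
    calc ∫⁻ x, D x * H x ∂Q ≤ ∫⁻ x, ENNReal.ofReal (g x) ∂Q := by
          apply lintegral_mono
          intro x
          exact ENNReal.mul_div_le
      _ = 1 := by
          rw [← ofReal_integral_eq_lintegral_ofReal hgintQ
            (Filter.Eventually.of_forall fun x => (hgpos x).le), hgint_one]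
          simp
  -- a.e. facts under P
  have hDpos : ∀ᵐ x ∂P, 0 < D x := Measure.rnDeriv_pos hPQ
  have hDlt : ∀ᵐ x ∂P, D x < ⊤ := hPQ.ae_le (Measure.rnDeriv_lt_top P Q)
  have hHlt : ∀ᵐ x ∂P, H x < ⊤ := by
    filter_upwards [hDpos] with x hx
    simp only [hHdef]
    exact ENNReal.div_lt_top ENNReal.ofReal_ne_top hx.ne'
  have hHint : Integrable (fun x => (H x).toReal) P :=
    integrable_toReal_of_lintegral_ne_top hHmeas.aemeasurable
      (lt_of_le_of_lt hH_le_one ENNReal.one_lt_top).ne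
  have hHint_le : ∫ x, (H x).toReal ∂P ≤ 1 := by
    rw [integral_toReal hHmeas.aemeasurable hHlt]
    exact ENNReal.toReal_le_of_le_ofReal zero_le_one (by simpa using hH_le_one)
  -- h x = g x / (D x).toReal a.e., and log h ≤ h - 1
  have hkey : ∀ᵐ x ∂P,
      Real.log (g x) - Real.log ((D x).toReal) ≤ (H x).toReal - 1 := by
    filter_upwards [hDpos, hDlt] with x hx0 hxt
    have hDr : 0 < (D x).toReal := ENNReal.toReal_pos hx0.ne' hxt.ne
    have hHx : (H x).toReal = g x / (D x).toReal := by
      simp only [hHdef]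
      rw [ENNReal.toReal_div, ENNReal.toReal_ofReal (hgpos x).le]
    have hru : 0 < (H x).toReal := by
      rw [hHx]; exact div_pos (hgpos x) hDr
    calc Real.log (g x) - Real.log ((D x).toReal)
        = Real.log ((H x).toReal) := by
          rw [hHx, Real.log_div (hgpos x).ne' hDr.ne']
      _ ≤ (H x).toReal - 1 := Real.log_le_sub_one_of_pos hru
  -- log g is integrable; compute its integral
  have hlogg : ∀ x, Real.log (g x) = E.indicator (fun _ => c) x - Real.log Z := by
    intro x
    by_cases hx : x ∈ E
    · simp only [hgdef, Set.indicator_of_mem hx]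
      rw [show Real.exp c - 1 + 1 = Real.exp c by ring,
        Real.log_div (Real.exp_pos c).ne' hZpos.ne', Real.log_exp]
    · simp only [hgdef, Set.indicator_of_notMem hx]
      rw [show (0:ℝ) + 1 = 1 by ring, Real.log_div one_ne_zero hZpos.ne', Real.log_one]
  have hloggint : Integrable (fun x => Real.log (g x)) P := by
    simp only [hlogg]
    exact (Integrable.indicator (integrable_const c) hE).sub (integrable_const _)
  have hloggval : ∫ x, Real.log (g x) ∂P = c * (P E).toReal - Real.log Z := by
    simp only [hlogg]
    rw [integral_sub (Integrable.indicator (integrable_const c) hE) (integrable_const _),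
      integral_indicator_const _ hE]
    simp [mul_comm, measureReal_def]
  -- put it together
  have hmain : ∫ x, (Real.log (g x) - Real.log ((D x).toReal)) ∂P
      ≤ ∫ x, ((H x).toReal - 1) ∂P :=
    integral_mono_ae (hloggint.sub hint) (hHint.sub (integrable_const 1)) hkey
  rw [integral_sub hloggint hint, integral_sub hHint (integrable_const 1),
    hloggval] at hmain
  simp only [integral_const, measure_univ, ENNReal.toReal_one, measureReal_def, smul_eq_mul, one_mul] at hmain
  have hfinal : c * (P E).toReal ≤
      (∫ x, Real.log ((D x).toReal) ∂P) + Real.log Z := by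
    have := hHint_le
    linarith
  rw [le_div_iff₀ hc]
  linarith
end

section
/- For probability measures P ≪ Q and any measurable set E, 2(1 − sqrt(P(E)Q(E)) − sqrt((1−P(E))(1−Q(E)))) ≤ H²(P;Q), where H²(P;Q) = ∫ (sqrt(dP/dQ) − 1)² dQ is the squared Hellinger distance. -/
open MeasureTheory

/-- Hellinger change of measure:
`2(1 − sqrt(P(E)Q(E)) − sqrt((1−P(E))(1−Q(E)))) ≤ H²(P;Q)` where
`H²(P;Q) = ∫ (sqrt(dP/dQ) − 1)² dQ`. -/
theorem hellinger_change_of_measure {X : Type*} [MeasurableSpace X]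
    (P Q : Measure X) [IsProbabilityMeasure P] [IsProbabilityMeasure Q]
    (hPQ : P ≪ Q) (E : Set X) (hE : MeasurableSet E) :
    2 * (1 - Real.sqrt ((P E).toReal * (Q E).toReal)
        - Real.sqrt ((1 - (P E).toReal) * (1 - (Q E).toReal)))
      ≤ ∫ x, (Real.sqrt ((P.rnDeriv Q x).toReal) - 1) ^ 2 ∂Q := by
  set f : X → ℝ := fun x => ((P.rnDeriv Q x).toReal) with hfdef
  set g : X → ℝ := fun x => Real.sqrt (f x) with hgdef
  have hf_nonneg : ∀ x, 0 ≤ f x := fun x => ENNReal.toReal_nonneg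
  have hg_nonneg : ∀ x, 0 ≤ g x := fun x => Real.sqrt_nonneg _
  have hgsq : ∀ x, g x ^ 2 = f x := fun x => Real.sq_sqrt (hf_nonneg x)
  have hf_int : Integrable f Q := Measure.integrable_toReal_rnDeriv
  have hf_meas : AEStronglyMeasurable f Q := hf_int.aestronglyMeasurable
  have hg_meas : AEStronglyMeasurable g Q :=
    Real.continuous_sqrt.comp_aestronglyMeasurable hf_meas
  have hg_int : Integrable g Q := by
    refine Integrable.mono' ((integrable_const (1:ℝ)).add hf_int) hg_meas ?_
    filter_upwards with x
    simp only [Pi.add_apply]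
    rw [Real.norm_of_nonneg (hg_nonneg x)]
    nlinarith [sq_nonneg (g x - 1), hgsq x, hf_nonneg x, hg_nonneg x]
  -- Cauchy–Schwarz on a measurable set
  have key : ∀ s : Set X, MeasurableSet s →
      ∫ x in s, g x ∂Q ≤ Real.sqrt ((P s).toReal * (Q s).toReal) := by
    intro s hs
    have hmem : MemLp g 2 (Q.restrict s) := by
      refine (memLp_two_iff_integrable_sq hg_meas.restrict).2 ?_
      have : (fun x => g x ^ 2) = f := funext hgsq
      rw [this]
      exact hf_int.restrict
    have hone : MemLp (fun _ : X => (1:ℝ)) 2 (Q.restrict s) := memLp_const 1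
    have h2 : (2:ℝ).HolderConjugate 2 := by
      constructor <;> norm_num
    have hh := integral_mul_le_Lp_mul_Lq_of_nonneg (μ := Q.restrict s) h2
      (Filter.Eventually.of_forall hg_nonneg)
      (Filter.Eventually.of_forall (fun _ => zero_le_one))
      (by simpa using hmem) (by simpa using hone)
    simp only [mul_one] at hh
    have hgs : ∫ x in s, g x ^ (2:ℝ) ∂Q = (P s).toReal := by
      have : ∀ x, g x ^ (2:ℝ) = f x := by
        intro x; rw [show (2:ℝ) = ((2:ℕ):ℝ) by norm_num, Real.rpow_natCast, hgsq]
      simp_rw [this]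
      exact Measure.setIntegral_toReal_rnDeriv hPQ s
    have hos : ∫ x in s, (1:ℝ) ^ (2:ℝ) ∂Q = (Q s).toReal := by
      simp [Measure.restrict_apply_univ, Measure.real]
    rw [hgs, hos] at hh
    calc ∫ x in s, g x ∂Q ≤ (P s).toReal ^ (1/2:ℝ) * (Q s).toReal ^ (1/2:ℝ) := hh
      _ = Real.sqrt ((P s).toReal * (Q s).toReal) := by
          rw [Real.sqrt_eq_rpow, Real.mul_rpow ENNReal.toReal_nonneg ENNReal.toReal_nonneg]
  -- compute the Hellinger integral
  have hint_f : ∫ x, f x ∂Q = 1 := by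
    rw [Measure.integral_toReal_rnDeriv hPQ]
    simp
  have hexp : ∀ x, (g x - 1) ^ 2 = f x - 2 * g x + 1 := by
    intro x; have := hgsq x; ring_nf; nlinarith [hgsq x]
  have hH : ∫ x, (g x - 1) ^ 2 ∂Q = 2 - 2 * ∫ x, g x ∂Q := by
    calc ∫ x, (g x - 1) ^ 2 ∂Q = ∫ x, (f x - 2 * g x + 1) ∂Q := by
          exact integral_congr_ae (Filter.Eventually.of_forall (fun x => hexp x))
      _ = (∫ x, f x ∂Q) - 2 * (∫ x, g x ∂Q) + 1 := by
          have h1 : Integrable (fun x => f x - 2 * g x) Q :=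
            hf_int.sub (hg_int.const_mul 2)
          have h2 : Integrable (fun x => 2 * g x) Q := hg_int.const_mul 2
          rw [integral_add h1 (integrable_const 1), integral_sub hf_int h2,
            integral_const_mul]
          simp
      _ = 2 - 2 * ∫ x, g x ∂Q := by rw [hint_f]; ring
  -- split the integral of g over E and its complement
  have hsplit : ∫ x, g x ∂Q = (∫ x in E, g x ∂Q) + ∫ x in Eᶜ, g x ∂Q :=
    (integral_add_compl hE hg_int).symm
  have hPc : (P Eᶜ).toReal = 1 - (P E).toReal := by
    rw [measure_compl hE (measure_ne_top P E), measure_univ,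
      ENNReal.toReal_sub_of_le prob_le_one ENNReal.one_ne_top, ENNReal.toReal_one]
  have hQc : (Q Eᶜ).toReal = 1 - (Q E).toReal := by
    rw [measure_compl hE (measure_ne_top Q E), measure_univ,
      ENNReal.toReal_sub_of_le prob_le_one ENNReal.one_ne_top, ENNReal.toReal_one]
  have h1 := key E hE
  have h2 := key Eᶜ hE.compl
  rw [hPc, hQc] at h2
  linarith [hsplit, h1, h2, hH]
end

section
/- For probability measures P ≪ Q, β > 1, and any measurable set E, P(E)^β Q(E)^{1−β} + (1 − P(E))^β (1 − Q(E))^{1−β} ≤ 1 + (β−1)·H_β(P‖Q), where H_β(P‖Q) := (∫ (dP/dQ)^β dQ − 1)/(β − 1) is the power-β divergence. -/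
open MeasureTheory

lemma power_div_key_aux {X : Type*} [MeasurableSpace X]
    (P Q : Measure X) [IsProbabilityMeasure P] [IsProbabilityMeasure Q]
    (hPQ : P ≪ Q) {β : ℝ} (hβ : 1 < β)
    (hint : Integrable (fun x => ((P.rnDeriv Q x).toReal) ^ β) Q)
    {A : Set X} (hA : MeasurableSet A) :
    (P A).toReal ^ β * (Q A).toReal ^ (1 - β)
      ≤ ∫ x in A, ((P.rnDeriv Q x).toReal) ^ β ∂Q := by
  set f : X → ℝ := fun x => (P.rnDeriv Q x).toReal with hf
  have hβ0 : (0:ℝ) < β := by linarith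
  have hb1 : (0:ℝ) < β - 1 := by linarith
  have hf_nonneg : ∀ x, 0 ≤ f x := fun x => ENNReal.toReal_nonneg
  have hXnn : 0 ≤ ∫ x in A, f x ^ β ∂Q :=
    integral_nonneg fun x => Real.rpow_nonneg (hf_nonneg x) β
  by_cases hQA : Q A = 0
  · have hPA : P A = 0 := hPQ hQA
    rw [hPA, hQA]
    simpa [Real.zero_rpow (ne_of_gt hβ0),
      Real.zero_rpow (show (1:ℝ) - β ≠ 0 by linarith)] using hXnn
  · have hQApos : 0 < (Q A).toReal := ENNReal.toReal_pos hQA (measure_ne_top _ _)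
    set q : ℝ := β / (β - 1) with hq
    have hpq : Real.HolderConjugate β q := Real.HolderConjugate.conjExponent hβ
    have hmeas : AEStronglyMeasurable f Q :=
      (Measure.measurable_rnDeriv P Q).ennreal_toReal.aestronglyMeasurable
    have hmem : MemLp f (ENNReal.ofReal β) Q := by
      rw [← memLp_norm_rpow_iff (q := ENNReal.ofReal β) hmeas
        (by simp [ENNReal.ofReal_eq_zero, not_le, hβ0]) ENNReal.ofReal_ne_top]
      have : (fun x : X => ‖f x‖ ^ (ENNReal.ofReal β).toReal) = fun x => f x ^ β := by
        funext x
        rw [Real.norm_of_nonneg (hf_nonneg x), ENNReal.toReal_ofReal hβ0.le]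
      rw [this, ENNReal.div_self (by simp [ENNReal.ofReal_eq_zero, not_le, hβ0])
        ENNReal.ofReal_ne_top, memLp_one_iff_integrable]
      exact hint
    have hgmem : MemLp (fun _ : X => (1:ℝ)) (ENNReal.ofReal q) (Q.restrict A) :=
      memLp_const 1
    have hold := integral_mul_le_Lp_mul_Lq_of_nonneg (μ := Q.restrict A) hpq
      (Filter.Eventually.of_forall hf_nonneg)
      (Filter.Eventually.of_forall (fun _ => zero_le_one))
      (hmem.restrict A) hgmem
    have h1 : ∫ a in A, f a * 1 ∂Q = (P A).toReal := by
      simp only [mul_one]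
      exact Measure.setIntegral_toReal_rnDeriv hPQ A
    have h2 : ∫ a in A, (1:ℝ) ^ q ∂Q = (Q A).toReal := by
      simp [Real.one_rpow]
      rfl
    rw [h1, h2] at hold
    -- raise to power β
    have hXnnf : 0 ≤ (∫ x in A, f x ^ β ∂Q) ^ (1 / β) := Real.rpow_nonneg hXnn _
    have hraise := Real.rpow_le_rpow ENNReal.toReal_nonneg hold hβ0.le
    rw [Real.mul_rpow hXnnf (Real.rpow_nonneg ENNReal.toReal_nonneg _)] at hraise
    have hr1 : ((∫ x in A, f x ^ β ∂Q) ^ (1 / β)) ^ β = ∫ x in A, f x ^ β ∂Q := by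
      rw [← Real.rpow_mul hXnn, one_div, inv_mul_cancel₀ (ne_of_gt hβ0), Real.rpow_one]
    have hr2 : ((Q A).toReal ^ (1 / q)) ^ β = (Q A).toReal ^ (β - 1) := by
      rw [← Real.rpow_mul ENNReal.toReal_nonneg]
      congr 1
      field_simp [hq]
      rw [hq, div_div_eq_mul_div]
      exact mul_div_cancel_left₀ (β - 1) (ne_of_gt hβ0)
    rw [hr1, hr2] at hraise
    -- multiply by (Q A).toReal ^ (1 - β)
    have hmul := mul_le_mul_of_nonneg_right hraise
      (Real.rpow_nonneg (le_of_lt hQApos) (1 - β))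
    calc (P A).toReal ^ β * (Q A).toReal ^ (1 - β)
        ≤ (∫ x in A, f x ^ β ∂Q) * (Q A).toReal ^ (β - 1) * (Q A).toReal ^ (1 - β) := hmul
      _ = ∫ x in A, f x ^ β ∂Q := by
          rw [mul_assoc, ← Real.rpow_add hQApos]
          norm_num

/-- Power-β divergence change of measure:
`P(E)^β Q(E)^{1−β} + (1−P(E))^β (1−Q(E))^{1−β} ≤ 1 + (β−1)·H_β(P‖Q)` where
`H_β(P‖Q) = (∫ (dP/dQ)^β dQ − 1)/(β−1)`. -/
theorem power_div_change_of_measure {X : Type*} [MeasurableSpace X]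
    (P Q : Measure X) [IsProbabilityMeasure P] [IsProbabilityMeasure Q]
    (hPQ : P ≪ Q) (β : ℝ) (hβ : 1 < β)
    (hint : Integrable (fun x => ((P.rnDeriv Q x).toReal) ^ β) Q)
    (E : Set X) (hE : MeasurableSet E) :
    (P E).toReal ^ β * (Q E).toReal ^ (1 - β)
        + (1 - (P E).toReal) ^ β * (1 - (Q E).toReal) ^ (1 - β)
      ≤ 1 + (β - 1) * (((∫ x, ((P.rnDeriv Q x).toReal) ^ β ∂Q) - 1) / (β - 1)) := by
  have hb1 : (β:ℝ) - 1 ≠ 0 := by linarith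
  have hRHS : 1 + (β - 1) * (((∫ x, ((P.rnDeriv Q x).toReal) ^ β ∂Q) - 1) / (β - 1))
      = ∫ x, ((P.rnDeriv Q x).toReal) ^ β ∂Q := by
    field_simp
    ring
  rw [hRHS, ← integral_add_compl hE hint]
  have hPc : (1 : ℝ) - (P E).toReal = (P Eᶜ).toReal := by
    rw [measure_compl hE (measure_ne_top _ _), measure_univ,
      ENNReal.toReal_sub_of_le (prob_le_one) ENNReal.one_ne_top, ENNReal.toReal_one]
  have hQc : (1 : ℝ) - (Q E).toReal = (Q Eᶜ).toReal := by
    rw [measure_compl hE (measure_ne_top _ _), measure_univ,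
      ENNReal.toReal_sub_of_le (prob_le_one) ENNReal.one_ne_top, ENNReal.toReal_one]
  rw [hPc, hQc]
  exact add_le_add (power_div_key_aux P Q hPQ hβ hint hE)
    (power_div_key_aux P Q hPQ hβ hint hE.compl)
end

section
/- Let p, q ∈ (0,1) and β > 1, and let H_β ≥ 0 satisfy p^β q^{1−β} + (1−p)^β (1−q)^{1−β} ≤ 1 + (β−1)H_β. Set u₀ := min{1, ((1 + (β−1)H_β)·q^{β−1})^{1/β}}. Then p ≤ (q^{β−1}·max(1 + (β−1)H_β − (1−q)^{1−β}(1−u₀)^β, 0))^{1/β}. -/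
/-- Refined relaxation of the binary power-β divergence inequality:
if `p^β q^{1−β} + (1−p)^β (1−q)^{1−β} ≤ 1 + (β−1)H` then
`p ≤ (q^{β−1}·[1 + (β−1)H − (1−q)^{1−β}(1−u₀)^β]₊)^{1/β}` where
`u₀ = min{1, ((1+(β−1)H) q^{β−1})^{1/β}}`. -/
theorem power_div_refined_relaxation (p q β H : ℝ)
    (hp : p ∈ Set.Ioo (0:ℝ) 1) (hq : q ∈ Set.Ioo (0:ℝ) 1)
    (hβ : 1 < β) (hH : 0 ≤ H)
    (hineq : p ^ β * q ^ (1 - β) + (1 - p) ^ β * (1 - q) ^ (1 - β)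
      ≤ 1 + (β - 1) * H) :
    p ≤ (q ^ (β - 1) *
          max (1 + (β - 1) * H -
            (1 - q) ^ (1 - β) *
              (1 - min 1 (((1 + (β - 1) * H) * q ^ (β - 1)) ^ (1 / β))) ^ β) 0)
        ^ (1 / β) := by
  obtain ⟨hp0, hp1⟩ := hp
  obtain ⟨hq0, hq1⟩ := hq
  set A := 1 + (β - 1) * H with hA
  have hA1 : 1 ≤ A := by nlinarith
  have hβ0 : (0:ℝ) < β := by linarith
  have hqpow : (0:ℝ) < q ^ (β - 1) := Real.rpow_pos_of_pos hq0 _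
  have hq1pow : (0:ℝ) < (1 - q) ^ (1 - β) := Real.rpow_pos_of_pos (by linarith) _
  have hmul : q ^ (1 - β) * q ^ (β - 1) = 1 := by
    rw [← Real.rpow_add hq0]; norm_num
  have h1p : (0:ℝ) < 1 - p := by linarith
  have hnn : (0:ℝ) ≤ (1 - p) ^ β * (1 - q) ^ (1 - β) :=
    mul_nonneg (Real.rpow_nonneg h1p.le _) hq1pow.le
  have step1 : p ^ β * q ^ (1 - β) ≤ A := by linarith
  have step2 : p ^ β ≤ A * q ^ (β - 1) := by
    calc p ^ β = p ^ β * q ^ (1 - β) * q ^ (β - 1) := by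
          rw [mul_assoc, hmul, mul_one]
      _ ≤ A * q ^ (β - 1) := mul_le_mul_of_nonneg_right step1 hqpow.le
  have hpid : (p ^ β) ^ (1 / β) = p := by
    rw [← Real.rpow_mul hp0.le, mul_one_div, div_self hβ0.ne', Real.rpow_one]
  set u := min 1 ((A * q ^ (β - 1)) ^ (1 / β)) with hu
  have hpu : p ≤ u := by
    refine le_min hp1.le ?_
    rw [← hpid]
    exact Real.rpow_le_rpow (Real.rpow_nonneg hp0.le _) step2 (by positivity)
  have hu1 : u ≤ 1 := min_le_left _ _
  have step4 : (1 - u) ^ β ≤ (1 - p) ^ β :=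
    Real.rpow_le_rpow (by linarith) (by linarith) hβ0.le
  have step5 : p ^ β * q ^ (1 - β) ≤ A - (1 - q) ^ (1 - β) * (1 - u) ^ β := by
    have h := mul_le_mul_of_nonneg_right step4 hq1pow.le
    nlinarith [h, hineq]
  have step6 : p ^ β ≤ q ^ (β - 1) *
      max (A - (1 - q) ^ (1 - β) * (1 - u) ^ β) 0 := by
    have h1 : p ^ β ≤ q ^ (β - 1) * (A - (1 - q) ^ (1 - β) * (1 - u) ^ β) := by
      calc p ^ β = p ^ β * q ^ (1 - β) * q ^ (β - 1) := by
            rw [mul_assoc, hmul, mul_one]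
        _ ≤ (A - (1 - q) ^ (1 - β) * (1 - u) ^ β) * q ^ (β - 1) :=
            mul_le_mul_of_nonneg_right step5 hqpow.le
        _ = q ^ (β - 1) * (A - (1 - q) ^ (1 - β) * (1 - u) ^ β) := by ring
    exact h1.trans (mul_le_mul_of_nonneg_left (le_max_left _ _) hqpow.le)
  calc p = (p ^ β) ^ (1 / β) := hpid.symm
    _ ≤ _ := Real.rpow_le_rpow (Real.rpow_nonneg hp0.le _) step6 (by positivity)
end

section
/- Let p, q ∈ (0,1) and let r ≥ 0 satisfy q²/p + (1−q)²/(1−p) ≤ 1 + r. Then p ≤ (r + 2q + sqrt(r² + 4r·q(1−q))) / (2(1+r)). In particular, for probability measures P ≪ Q with r = χ²(Q‖P), this bounds P(E) for any measurable E via the reverse chi-squared divergence. -/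
/-- Reverse chi-squared change of measure (scalar form): if
`q²/p + (1−q)²/(1−p) ≤ 1 + r` with `r ≥ 0`, then
`p ≤ (r + 2q + sqrt(r² + 4r q(1−q)))/(2(1+r))`. -/
theorem reverse_chisq_change_of_measure (p q r : ℝ)
    (hp : p ∈ Set.Ioo (0:ℝ) 1) (hq : q ∈ Set.Ioo (0:ℝ) 1) (hr : 0 ≤ r)
    (hineq : q ^ 2 / p + (1 - q) ^ 2 / (1 - p) ≤ 1 + r) :
    p ≤ (r + 2 * q + Real.sqrt (r ^ 2 + 4 * r * q * (1 - q))) / (2 * (1 + r)) := by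
  obtain ⟨hp0, hp1⟩ := hp
  obtain ⟨hq0, hq1⟩ := hq
  have hp1' : 0 < 1 - p := by linarith
  have hkey : (1 + r) * p ^ 2 - (2 * q + r) * p + q ^ 2 ≤ 0 := by
    have h2 : q ^ 2 / p + (1 - q) ^ 2 / (1 - p)
        = (q ^ 2 * (1 - p) + (1 - q) ^ 2 * p) / (p * (1 - p)) := by
      field_simp
    rw [h2, div_le_iff₀ (by positivity)] at hineq
    nlinarith [hineq]
  have hD : 0 ≤ r ^ 2 + 4 * r * q * (1 - q) := by nlinarith [mul_nonneg (mul_nonneg hr hq0.le) (by linarith : (0:ℝ) ≤ 1 - q)]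
  set s := Real.sqrt (r ^ 2 + 4 * r * q * (1 - q)) with hs
  have hs0 : 0 ≤ s := Real.sqrt_nonneg _
  have hs2 : s ^ 2 = r ^ 2 + 4 * r * q * (1 - q) := Real.sq_sqrt hD
  rw [le_div_iff₀ (by positivity)]
  nlinarith [sq_nonneg (2 * (1 + r) * p - (r + 2 * q)), sq_nonneg (2 * (1 + r) * p - (r + 2 * q) - s), mul_nonneg hs0 hr, sq_nonneg (p - q)]
end

section
/- Let p, q ∈ (0,1) and let V ≥ 0 satisfy 2(p−q)²/((p+q)(2−p−q)) ≤ V. Then p ≤ (V(1−q) + 2q + sqrt(V(V + 8q(1−q)))) / (V + 2). -/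
/-- Vincze–Le Cam change of measure (scalar form): if
`2(p−q)²/((p+q)(2−p−q)) ≤ V` with `V ≥ 0`, then
`p ≤ (V(1−q) + 2q + sqrt(V(V + 8q(1−q))))/(V+2)`. -/
theorem vincze_lecam_change_of_measure (p q V : ℝ)
    (hp : p ∈ Set.Ioo (0:ℝ) 1) (hq : q ∈ Set.Ioo (0:ℝ) 1) (hV : 0 ≤ V)
    (hineq : 2 * (p - q) ^ 2 / ((p + q) * (2 - p - q)) ≤ V) :
    p ≤ (V * (1 - q) + 2 * q + Real.sqrt (V * (V + 8 * q * (1 - q)))) / (V + 2) := by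
  obtain ⟨hp0, hp1⟩ := hp
  obtain ⟨hq0, hq1⟩ := hq
  have hden : 0 < (p + q) * (2 - p - q) := by nlinarith
  have h1 : 2 * (p - q) ^ 2 ≤ V * ((p + q) * (2 - p - q)) := by
    rw [div_le_iff₀ hden] at hineq; linarith
  set b : ℝ := V * (1 - q) + 2 * q with hb
  set D : ℝ := V * (V + 8 * q * (1 - q)) with hD
  have hDnn : 0 ≤ D := by
    have : 0 ≤ q * (1 - q) := by nlinarith
    rw [hD]; nlinarith
  set s : ℝ := Real.sqrt D with hs
  have hsnn : 0 ≤ s := Real.sqrt_nonneg _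
  have hs2 : s ^ 2 = D := Real.sq_sqrt hDnn
  have key : ((V + 2) * p - b) ^ 2 ≤ D := by
    have h3 := mul_le_mul_of_nonneg_left h1 (show (0:ℝ) ≤ V + 2 by linarith)
    rw [hD, hb]; nlinarith [h3]
  have h2 : (V + 2) * p - b ≤ s := by nlinarith
  rw [le_div_iff₀ (by linarith : (0:ℝ) < V + 2)]
  linarith
end

section
/- (Data processing for indicator channel.) Let f : (0,∞) → ℝ be convex with f(1) = 0, extended by f(0) = lim_{t↓0} f(t). For probability measures P ≪ Q and any measurable set E with q := Q(E) ∈ (0,1) and p := P(E), one has D_f(P‖Q) ≥ q·f(p/q) + (1−q)·f((1−p)/(1−q)). -/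
open MeasureTheory

/-- Data processing inequality for the indicator channel: for convex `f` with
`f(1) = 0` (extended continuously to `0`), `P ≪ Q` and `q := Q(E) ∈ (0,1)`,
`D_f(P‖Q) ≥ q f(p/q) + (1−q) f((1−p)/(1−q))` with `p := P(E)`. -/
theorem dpi_indicator_channel {X : Type*} [MeasurableSpace X]
    (P Q : Measure X) [IsProbabilityMeasure P] [IsProbabilityMeasure Q]
    (hPQ : P ≪ Q) (f : ℝ → ℝ)
    (hconv : ConvexOn ℝ (Set.Ici 0) f) (hf1 : f 1 = 0)
    (hf0 : Filter.Tendsto f (nhdsWithin 0 (Set.Ioi 0)) (nhds (f 0)))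
    (hint : Integrable (fun x => f ((P.rnDeriv Q x).toReal)) Q)
    (E : Set X) (hE : MeasurableSet E)
    (hq0 : 0 < (Q E).toReal) (hq1 : (Q E).toReal < 1) :
    (Q E).toReal * f ((P E).toReal / (Q E).toReal)
      + (1 - (Q E).toReal) * f ((1 - (P E).toReal) / (1 - (Q E).toReal))
      ≤ ∫ x, f ((P.rnDeriv Q x).toReal) ∂Q := by
  -- continuity of f on [0,∞)
  have hcont : ContinuousOn f (Set.Ici 0) := by
    intro x hx
    rcases eq_or_lt_of_le (Set.mem_Ici.mp hx) with h0 | hpos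
    · subst h0
      have h1 : nhdsWithin (0:ℝ) (Set.Ici 0) = pure 0 ⊔ nhdsWithin 0 (Set.Ioi 0) := by
        rw [← Set.Ioi_insert, nhdsWithin_insert]
      unfold ContinuousWithinAt
      rw [h1]
      exact Filter.Tendsto.sup (by simpa using tendsto_pure_nhds f 0) hf0
    · have hio : ContinuousOn f (Set.Ioi 0) := by
        have := hconv.continuousOn_interior
        rwa [interior_Ici] at this
      exact ((hio.continuousAt (Ioi_mem_nhds hpos)).continuousWithinAt)
  -- key one-sided Jensen inequality
  have key : ∀ A : Set X, MeasurableSet A → 0 < (Q A).toReal →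
      (Q A).toReal * f ((P A).toReal / (Q A).toReal)
        ≤ ∫ x in A, f ((P.rnDeriv Q x).toReal) ∂Q := by
    intro A hA hQA
    have hQAne : Q A ≠ 0 := by
      intro h; rw [h] at hQA; simp at hQA
    haveI : NeZero (Q.restrict A) := ⟨by
      intro h
      apply hQAne
      have := congrArg (fun μ : Measure X => μ Set.univ) h
      simpa [Measure.restrict_apply_univ] using this⟩
    have hgint : Integrable (fun x => (P.rnDeriv Q x).toReal) (Q.restrict A) :=
      (Measure.integrable_toReal_rnDeriv (μ := P) (ν := Q)).restrict
    have hfgint : Integrable (fun x => f ((P.rnDeriv Q x).toReal)) (Q.restrict A) :=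
      hint.restrict
    have hmem : ∀ᵐ x ∂(Q.restrict A), (P.rnDeriv Q x).toReal ∈ Set.Ici (0:ℝ) :=
      Filter.Eventually.of_forall fun x => ENNReal.toReal_nonneg
    have hJ := hconv.map_average_le hcont isClosed_Ici hmem hgint hfgint
    have havg : ⨍ x, (P.rnDeriv Q x).toReal ∂(Q.restrict A)
        = (P A).toReal / (Q A).toReal := by
      rw [average_eq, measureReal_def, Measure.restrict_apply_univ,
        Measure.setIntegral_toReal_rnDeriv hPQ A]
      rw [smul_eq_mul, div_eq_inv_mul, measureReal_def]
    have havg2 : ⨍ x, f ((P.rnDeriv Q x).toReal) ∂(Q.restrict A)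
        = (Q A).toReal⁻¹ * ∫ x in A, f ((P.rnDeriv Q x).toReal) ∂Q := by
      rw [average_eq, measureReal_def, Measure.restrict_apply_univ, smul_eq_mul]
    rw [havg, havg2] at hJ
    rw [← div_eq_inv_mul] at hJ
    rw [mul_comm]
    exact (le_div_iff₀ hQA).mp hJ
  -- apply to E and Eᶜ
  have hQc : (Q Eᶜ).toReal = 1 - (Q E).toReal := by
    rw [measure_compl hE (measure_ne_top Q E), measure_univ,
      ENNReal.toReal_sub_of_le prob_le_one ENNReal.one_ne_top, ENNReal.toReal_one]
  have hPc : (P Eᶜ).toReal = 1 - (P E).toReal := by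
    rw [measure_compl hE (measure_ne_top P E), measure_univ,
      ENNReal.toReal_sub_of_le prob_le_one ENNReal.one_ne_top, ENNReal.toReal_one]
  have h1 := key E hE hq0
  have h2 := key Eᶜ hE.compl (by rw [hQc]; linarith)
  rw [hQc, hPc] at h2
  have hsplit : (∫ x in E, f ((P.rnDeriv Q x).toReal) ∂Q)
      + ∫ x in Eᶜ, f ((P.rnDeriv Q x).toReal) ∂Q
      = ∫ x, f ((P.rnDeriv Q x).toReal) ∂Q :=
    integral_add_compl hE hint
  linarith
end
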